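/- The brick triple (ℂ²; ℂ(1,0), ℂ(0,1), ℂ(1,1)) can be unitarized with character (a₀;a₁,a₂,a₃) if and only if 0 < aᵢ < a₀ for i = 1,2,3 and 2a₀ = a₁ + a₂ + a₃. That is, there exists an inner product on ℂ² with orthogonal projections P₁,P₂,P₃ onto the three lines satisfying a₁P₁ + a₂P₂ + a₃P₃ = a₀I exactly under these conditions. -/

import Mathlib

/-- The system of subspaces `Vs` of the complex vector space `V` can be
unitarized with character `(a₀; a)`: there is a (positive definite hermitian)
inner product `B` on `V` such that the `B`-orthogonal projections `P i` onto
the subspaces `Vs i` satisfy `∑ i, a i • P i = a₀ • I`. -/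
def Unitarizable {V : Type*} [AddCommGroup V] [Module ℂ V] {n : ℕ}
    (Vs : Fin n → Submodule ℂ V) (a₀ : ℝ) (a : Fin n → ℝ) : Prop :=
  ∃ (B : V → V → ℂ) (P : Fin n → V →ₗ[ℂ] V),
    (∀ x y z, B (x + y) z = B x z + B y z) ∧
    (∀ (c : ℂ) (x y : V), B (c • x) y = (starRingEnd ℂ) c * B x y) ∧
    (∀ x y, B x y = (starRingEnd ℂ) (B y x)) ∧
    (∀ x, x ≠ 0 → 0 < (B x x).re) ∧
    (∀ i, LinearMap.range (P i) = Vs i) ∧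
    (∀ i, P i ∘ₗ P i = P i) ∧
    (∀ i x y, B (P i x) y = B x (P i y)) ∧
    (∑ i, (a i : ℂ) • P i) = (a₀ : ℂ) • LinearMap.id

open Complex ComplexConjugate

set_option maxHeartbeats 1000000


/-- auxiliary hermitian form for the brick triple -/
noncomputable def brickB (p q : ℝ) (x y : Fin 2 → ℂ) : ℂ :=
  (p:ℂ) * (conj (x 0) * y 0) - conj (x 0) * y 1 - conj (x 1) * y 0
    + (q:ℂ) * (conj (x 1) * y 1)

noncomputable def brickP1 (w : ℝ) : (Fin 2 → ℂ) →ₗ[ℂ] (Fin 2 → ℂ) where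
  toFun x := ![x 0 - (w:ℂ) * x 1, 0]
  map_add' x y := by funext j; fin_cases j <;> simp <;> ring
  map_smul' c x := by funext j; fin_cases j <;> simp <;> ring

noncomputable def brickP2 (w : ℝ) : (Fin 2 → ℂ) →ₗ[ℂ] (Fin 2 → ℂ) where
  toFun x := ![0, x 1 - (w:ℂ) * x 0]
  map_add' x y := by funext j; fin_cases j <;> simp <;> ring
  map_smul' c x := by funext j; fin_cases j <;> simp <;> ring

noncomputable def brickP3 (u v : ℝ) : (Fin 2 → ℂ) →ₗ[ℂ] (Fin 2 → ℂ) where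
  toFun x := ![(u:ℂ) * x 0 + (v:ℂ) * x 1, (u:ℂ) * x 0 + (v:ℂ) * x 1]
  map_add' x y := by funext j; fin_cases j <;> simp <;> ring
  map_smul' c x := by funext j; fin_cases j <;> simp <;> ring

lemma brickP1_apply (w : ℝ) (x : Fin 2 → ℂ) :
    brickP1 w x = ![x 0 - (w:ℂ) * x 1, 0] := rfl

lemma brickP2_apply (w : ℝ) (x : Fin 2 → ℂ) :
    brickP2 w x = ![0, x 1 - (w:ℂ) * x 0] := rfl

lemma brickP3_apply (u v : ℝ) (x : Fin 2 → ℂ) :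
    brickP3 u v x = ![(u:ℂ) * x 0 + (v:ℂ) * x 1, (u:ℂ) * x 0 + (v:ℂ) * x 1] := rfl

lemma brickB_add_left (p q : ℝ) (x y z : Fin 2 → ℂ) :
    brickB p q (x + y) z = brickB p q x z + brickB p q y z := by
  simp only [brickB, Pi.add_apply, map_add]; ring

lemma brickB_conj_smul (p q : ℝ) (c : ℂ) (x y : Fin 2 → ℂ) :
    brickB p q (c • x) y = conj c * brickB p q x y := by
  simp only [brickB, Pi.smul_apply, smul_eq_mul, map_mul]; ring

lemma brickB_conj (p q : ℝ) (x y : Fin 2 → ℂ) :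
    brickB p q x y = conj (brickB p q y x) := by
  simp only [brickB, map_add, map_sub, map_mul, Complex.conj_conj, Complex.conj_ofReal]; ring

lemma brickB_pos {p q : ℝ} (hp : 0 < p) (hpq : 1 < p * q)
    (x : Fin 2 → ℂ) (hx : x ≠ 0) : 0 < (brickB p q x x).re := by
  have key : (brickB p q x x).re
      = p * ((x 0).re ^ 2 + (x 0).im ^ 2) + q * ((x 1).re ^ 2 + (x 1).im ^ 2)
        - 2 * ((x 0).re * (x 1).re + (x 0).im * (x 1).im) := by
    simp only [brickB, Complex.add_re, Complex.sub_re, Complex.mul_re, Complex.mul_im,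
      Complex.conj_re, Complex.conj_im, Complex.ofReal_re, Complex.ofReal_im]
    ring
  rw [key]
  by_cases h1x : x 1 = 0
  · have h0x : x 0 ≠ 0 := by
      intro h0; exact hx (funext fun i => by fin_cases i <;> simp [h0, h1x])
    have hn := Complex.normSq_pos.mpr h0x
    rw [Complex.normSq_apply] at hn
    rw [h1x]
    simp only [Complex.zero_re, Complex.zero_im]
    nlinarith
  · have hn := Complex.normSq_pos.mpr h1x
    rw [Complex.normSq_apply] at hn
    nlinarith [sq_nonneg (p * (x 0).re - (x 1).re), sq_nonneg (p * (x 0).im - (x 1).im),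
      mul_pos (by nlinarith : (0:ℝ) < p * q - 1) hn, hp]

lemma brickP1_range {w : ℝ} :
    LinearMap.range (brickP1 w) = Submodule.span ℂ {![(1:ℂ), 0]} := by
  apply le_antisymm
  · rintro y ⟨x, rfl⟩
    refine Submodule.mem_span_singleton.mpr ⟨x 0 - (w:ℂ) * x 1, ?_⟩
    funext j; fin_cases j <;> simp [brickP1_apply]
  · rw [Submodule.span_le, Set.singleton_subset_iff]
    exact ⟨![1, 0], by funext j; fin_cases j <;> simp [brickP1_apply]⟩

lemma brickP2_range {w : ℝ} :
    LinearMap.range (brickP2 w) = Submodule.span ℂ {![(0:ℂ), 1]} := by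
  apply le_antisymm
  · rintro y ⟨x, rfl⟩
    refine Submodule.mem_span_singleton.mpr ⟨x 1 - (w:ℂ) * x 0, ?_⟩
    funext j; fin_cases j <;> simp [brickP2_apply]
  · rw [Submodule.span_le, Set.singleton_subset_iff]
    exact ⟨![0, 1], by funext j; fin_cases j <;> simp [brickP2_apply]⟩

lemma brickP3_range {u v : ℝ} (huv : u + v = 1) :
    LinearMap.range (brickP3 u v) = Submodule.span ℂ {![(1:ℂ), 1]} := by
  have huvc : (u:ℂ) + (v:ℂ) = 1 := by exact_mod_cast congrArg Complex.ofReal huv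
  apply le_antisymm
  · rintro y ⟨x, rfl⟩
    refine Submodule.mem_span_singleton.mpr ⟨(u:ℂ) * x 0 + (v:ℂ) * x 1, ?_⟩
    funext j; fin_cases j <;> simp [brickP3_apply]
  · rw [Submodule.span_le, Set.singleton_subset_iff]
    refine ⟨![1, 1], ?_⟩
    funext j; fin_cases j <;>
      · simp [brickP3_apply]
        linear_combination huvc

lemma brickP1_idem {w : ℝ} : brickP1 w ∘ₗ brickP1 w = brickP1 w := by
  apply LinearMap.ext; intro x; funext j
  fin_cases j <;> simp [brickP1_apply]

lemma brickP2_idem {w : ℝ} : brickP2 w ∘ₗ brickP2 w = brickP2 w := by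
  apply LinearMap.ext; intro x; funext j
  fin_cases j <;> simp [brickP2_apply]

lemma brickP3_idem {u v : ℝ} (huv : u + v = 1) :
    brickP3 u v ∘ₗ brickP3 u v = brickP3 u v := by
  have huvc : (u:ℂ) + (v:ℂ) = 1 := by exact_mod_cast congrArg Complex.ofReal huv
  apply LinearMap.ext; intro x; funext j
  fin_cases j <;>
    · simp [brickP3_apply]
      linear_combination ((u:ℂ) * x 0 + (v:ℂ) * x 1) * huvc

lemma brickP1_selfadj {p q w : ℝ} (hw : p * w = 1) (x y : Fin 2 → ℂ) :
    brickB p q (brickP1 w x) y = brickB p q x (brickP1 w y) := by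
  have hwc : ((p:ℂ)) * (w:ℂ) = 1 := by exact_mod_cast congrArg Complex.ofReal hw
  simp only [brickB, brickP1_apply, Matrix.cons_val_zero, Matrix.cons_val_one,
    Matrix.head_cons, map_sub, map_mul, Complex.conj_ofReal, map_zero]
  linear_combination (conj (x 0) * y 1 - conj (x 1) * y 0) * hwc

lemma brickP2_selfadj {p q w : ℝ} (hw : q * w = 1) (x y : Fin 2 → ℂ) :
    brickB p q (brickP2 w x) y = brickB p q x (brickP2 w y) := by
  have hwc : ((q:ℂ)) * (w:ℂ) = 1 := by exact_mod_cast congrArg Complex.ofReal hw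
  simp only [brickB, brickP2_apply, Matrix.cons_val_zero, Matrix.cons_val_one,
    Matrix.head_cons, map_sub, map_mul, Complex.conj_ofReal, map_zero]
  linear_combination (conj (x 1) * y 0 - conj (x 0) * y 1) * hwc

lemma brickP3_selfadj {p q u v : ℝ} (huv : (q - 1) * u = (p - 1) * v) (x y : Fin 2 → ℂ) :
    brickB p q (brickP3 u v x) y = brickB p q x (brickP3 u v y) := by
  have hc : ((q:ℂ) - 1) * (u:ℂ) = ((p:ℂ) - 1) * (v:ℂ) := by
    exact_mod_cast congrArg Complex.ofReal huv
  simp only [brickB, brickP3_apply, Matrix.cons_val_zero, Matrix.cons_val_one,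
    Matrix.head_cons, map_add, map_mul, Complex.conj_ofReal]
  linear_combination (conj (x 0) * y 1 - conj (x 1) * y 0) * hc

lemma brick_sum {a₀ A1 A2 A3 w1 w2 u v : ℝ}
    (e11 : A1 + A3 * u = a₀) (e12 : A3 * v = A1 * w1)
    (e21 : A3 * u = A2 * w2) (e22 : A2 + A3 * v = a₀) :
    (A1:ℂ) • brickP1 w1 + (A2:ℂ) • brickP2 w2 + (A3:ℂ) • brickP3 u v
      = (a₀:ℂ) • LinearMap.id := by
  have c11 : (A1:ℂ) + (A3:ℂ) * (u:ℂ) = (a₀:ℂ) := by exact_mod_cast congrArg Complex.ofReal e11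
  have c12 : (A3:ℂ) * (v:ℂ) = (A1:ℂ) * (w1:ℂ) := by exact_mod_cast congrArg Complex.ofReal e12
  have c21 : (A3:ℂ) * (u:ℂ) = (A2:ℂ) * (w2:ℂ) := by exact_mod_cast congrArg Complex.ofReal e21
  have c22 : (A2:ℂ) + (A3:ℂ) * (v:ℂ) = (a₀:ℂ) := by exact_mod_cast congrArg Complex.ofReal e22
  apply LinearMap.ext; intro x
  funext j
  fin_cases j <;>
    simp [brickP1_apply, brickP2_apply, brickP3_apply]
  · linear_combination x 0 * c11 + x 1 * c12
  · linear_combination x 1 * c22 + x 0 * c21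

/-- the brick triple (ℂ²; ℂ(1,0), ℂ(0,1), ℂ(1,1)) can be
unitarized with character (a₀; a₁, a₂, a₃), all aᵢ > 0, iff
aᵢ < a₀ for all i and 2a₀ = a₁ + a₂ + a₃. -/
theorem unitarizable_brick_triple
    (a₀ : ℝ) (a : Fin 3 → ℝ) (ha : ∀ i, 0 < a i) :
    Unitarizable
      (![Submodule.span ℂ {![(1 : ℂ), 0]},
         Submodule.span ℂ {![(0 : ℂ), 1]},
         Submodule.span ℂ {![(1 : ℂ), 1]}] : Fin 3 → Submodule ℂ (Fin 2 → ℂ)) a₀ a ↔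
    (∀ i, a i < a₀) ∧ 2 * a₀ = a 0 + a 1 + a 2 := by
  unfold Unitarizable
  constructor
  · rintro ⟨B, P, hBadd, hBsmul, hBconj, hBpos, hrange, hidem, hsa, hsum⟩
    set e1 : Fin 2 → ℂ := ![1, 0] with he1
    set e2 : Fin 2 → ℂ := ![0, 1] with he2
    set v3 : Fin 2 → ℂ := ![1, 1] with hv3
    have hv3e : v3 = e1 + e2 := by funext j; fin_cases j <;> simp [he1, he2, hv3]
    have he1ne : e1 ≠ 0 := fun h => by simpa [he1] using congrFun h 0
    have he2ne : e2 ≠ 0 := fun h => by simpa [he2] using congrFun h 1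
    have hv3ne : v3 ≠ 0 := fun h => by simpa [hv3] using congrFun h 0
    -- basic B facts
    have hB0left : ∀ z, B 0 z = 0 := by
      intro z; have h := hBadd 0 0 z; rw [add_zero] at h; linear_combination -h
    have hB0right : ∀ z, B z 0 = 0 := by
      intro z; rw [hBconj, hB0left, map_zero]
    have hBaddR : ∀ x y z, B x (y + z) = B x y + B x z := by
      intro x y z; rw [hBconj, hBadd, map_add, ← hBconj, ← hBconj]
    have hBsmulR : ∀ (c : ℂ) (x y : Fin 2 → ℂ), B x (c • y) = c * B x y := by
      intro c x y
      rw [hBconj, hBsmul, map_mul, Complex.conj_conj, ← hBconj]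
    have hBre : ∀ x, 0 ≤ (B x x).re := by
      intro x
      by_cases hx : x = 0
      · simp [hx, hB0left]
      · exact (hBpos x hx).le
    -- idempotency pointwise
    have hid : ∀ i x, P i (P i x) = P i x := by
      intro i x
      have := LinearMap.ext_iff.mp (hidem i) x
      simpa using this
    -- fixed vectors
    have hfix : ∀ (i : Fin 3) (v : Fin 2 → ℂ), v ∈ LinearMap.range (P i) → P i v = v := by
      rintro i v ⟨w, rfl⟩; exact hid i w
    have hP0e1 : P 0 e1 = e1 := by
      apply hfix; rw [hrange 0]; exact Submodule.mem_span_singleton_self _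
    have hP1e2 : P 1 e2 = e2 := by
      apply hfix; rw [hrange 1]; exact Submodule.mem_span_singleton_self _
    have hP2v3 : P 2 v3 = v3 := by
      apply hfix; rw [hrange 2]; exact Submodule.mem_span_singleton_self _
    -- scalar forms
    have hmem : ∀ (i : Fin 3) (x : Fin 2 → ℂ), P i x ∈ LinearMap.range (P i) :=
      fun i x => LinearMap.mem_range_self _ x
    obtain ⟨α, hα⟩ : ∃ α : ℂ, P 0 e2 = α • e1 := by
      have h := hmem 0 e2; rw [hrange 0] at h
      obtain ⟨α, hα⟩ := Submodule.mem_span_singleton.mp h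
      exact ⟨α, hα.symm⟩
    obtain ⟨β, hβ⟩ : ∃ β : ℂ, P 1 e1 = β • e2 := by
      have h := hmem 1 e1; rw [hrange 1] at h
      obtain ⟨β, hβ⟩ := Submodule.mem_span_singleton.mp h
      exact ⟨β, hβ.symm⟩
    obtain ⟨γ, hγ⟩ : ∃ γ : ℂ, P 2 e1 = γ • v3 := by
      have h := hmem 2 e1; rw [hrange 2] at h
      obtain ⟨γ, hγ⟩ := Submodule.mem_span_singleton.mp h
      exact ⟨γ, hγ.symm⟩
    obtain ⟨δ, hδ⟩ : ∃ δ : ℂ, P 2 e2 = δ • v3 := by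
      have h := hmem 2 e2; rw [hrange 2] at h
      obtain ⟨δ, hδ⟩ := Submodule.mem_span_singleton.mp h
      exact ⟨δ, hδ.symm⟩
    -- evaluate the sum identity at e1 and e2
    have hs1 : (a 0 : ℂ) • (P 0 e1) + (a 1 : ℂ) • (P 1 e1) + (a 2 : ℂ) • (P 2 e1)
        = (a₀ : ℂ) • e1 := by
      have h := LinearMap.ext_iff.mp hsum e1
      simpa [Fin.sum_univ_three] using h
    have hs2 : (a 0 : ℂ) • (P 0 e2) + (a 1 : ℂ) • (P 1 e2) + (a 2 : ℂ) • (P 2 e2)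
        = (a₀ : ℂ) • e2 := by
      have h := LinearMap.ext_iff.mp hsum e2
      simpa [Fin.sum_univ_three] using h
    rw [hP0e1, hβ, hγ] at hs1
    rw [hP1e2, hα, hδ] at hs2
    have hγ0 : (a 2 : ℂ) * γ = (a₀ : ℂ) - a 0 := by
      have h := congrFun hs1 0
      simp [he1, he2, hv3] at h
      linear_combination h
    have hδ0 : (a 2 : ℂ) * δ = (a₀ : ℂ) - a 1 := by
      have h := congrFun hs2 1
      simp [he1, he2, hv3] at h
      linear_combination h
    have hγδ : γ + δ = 1 := by
      have h : γ • v3 + δ • v3 = v3 := by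
        rw [← hγ, ← hδ, ← map_add, ← hv3e, hP2v3]
      have h0 := congrFun h 0
      simp [hv3] at h0
      linear_combination h0
    have hsumC : 2 * (a₀ : ℂ) = (a 0 : ℂ) + a 1 + a 2 := by
      linear_combination (a 2 : ℂ) * hγδ - hγ0 - hδ0
    have hsumR : 2 * a₀ = a 0 + a 1 + a 2 := by exact_mod_cast hsumC
    -- the key identity for strict inequalities
    have hBP : ∀ (j : Fin 3) (v : Fin 2 → ℂ), B v (P j v) = B (P j v) (P j v) := by
      intro j v
      conv_lhs => rw [← hid j v]
      exact (hsa j v (P j v)).symm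
    have hkey : ∀ v : Fin 2 → ℂ,
        (a₀ : ℂ) * B v v = (a 0 : ℂ) * B (P 0 v) (P 0 v) + (a 1 : ℂ) * B (P 1 v) (P 1 v)
          + (a 2 : ℂ) * B (P 2 v) (P 2 v) := by
      intro v
      have h := LinearMap.ext_iff.mp hsum v
      simp only [Fin.sum_univ_three, LinearMap.add_apply, LinearMap.smul_apply,
        LinearMap.id_coe, id_eq] at h
      have h2 := congrArg (B v) h
      rw [hBaddR, hBaddR, hBsmulR, hBsmulR, hBsmulR, hBsmulR] at h2
      rw [hBP 0 v, hBP 1 v, hBP 2 v] at h2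
      linear_combination h2.symm
    have hre : ∀ v : Fin 2 → ℂ,
        a₀ * (B v v).re = a 0 * (B (P 0 v) (P 0 v)).re + a 1 * (B (P 1 v) (P 1 v)).re
          + a 2 * (B (P 2 v) (P 2 v)).re := by
      intro v
      have h := congrArg Complex.re (hkey v)
      simpa [Complex.add_re, Complex.mul_re, Complex.ofReal_re, Complex.ofReal_im] using h
    -- zero projection from vanishing re
    have hzero : ∀ (j : Fin 3) (v : Fin 2 → ℂ), (B (P j v) (P j v)).re = 0 → P j v = 0 := by
      intro j v h
      by_contra hne
      exact absurd h (hBpos _ hne).ne'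
    -- i = 0
    have hlt0 : a 0 < a₀ := by
      have hp := hBpos e1 he1ne
      have h := hre e1
      rw [hP0e1] at h
      by_contra hc
      push_neg at hc
      have hprod : a 1 * (B (P 1 e1) (P 1 e1)).re + a 2 * (B (P 2 e1) (P 2 e1)).re ≤ 0 := by
        nlinarith [mul_nonneg (sub_nonneg.mpr hc) hp.le]
      have h1 : (B (P 1 e1) (P 1 e1)).re = 0 := by
        nlinarith [mul_nonneg (ha 2).le (hBre (P 2 e1)), hBre (P 1 e1), ha 1]
      have h2 : (B (P 2 e1) (P 2 e1)).re = 0 := by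
        nlinarith [mul_nonneg (ha 1).le (hBre (P 1 e1)), hBre (P 2 e1), ha 2]
      have hz1 := hzero 1 e1 h1
      have hz2 := hzero 2 e1 h2
      have hb2 : B e2 e1 = 0 := by
        rw [← hP1e2, hsa, hz1, hB0right]
      have hb3 : B v3 e1 = 0 := by
        rw [← hP2v3, hsa, hz2, hB0right]
      rw [hv3e, hBadd, hb2, add_zero] at hb3
      rw [hb3] at hp
      simp at hp
    have hlt1 : a 1 < a₀ := by
      have hp := hBpos e2 he2ne
      have h := hre e2
      rw [hP1e2] at h
      by_contra hc
      push_neg at hc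
      have hprod : a 0 * (B (P 0 e2) (P 0 e2)).re + a 2 * (B (P 2 e2) (P 2 e2)).re ≤ 0 := by
        nlinarith [mul_nonneg (sub_nonneg.mpr hc) hp.le]
      have h1 : (B (P 0 e2) (P 0 e2)).re = 0 := by
        nlinarith [mul_nonneg (ha 2).le (hBre (P 2 e2)), hBre (P 0 e2), ha 0]
      have h2 : (B (P 2 e2) (P 2 e2)).re = 0 := by
        nlinarith [mul_nonneg (ha 0).le (hBre (P 0 e2)), hBre (P 2 e2), ha 2]
      have hz1 := hzero 0 e2 h1
      have hz2 := hzero 2 e2 h2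
      have hb1 : B e1 e2 = 0 := by
        rw [← hP0e1, hsa, hz1, hB0right]
      have hb3 : B v3 e2 = 0 := by
        rw [← hP2v3, hsa, hz2, hB0right]
      rw [hv3e, hBadd, hb1] at hb3
      rw [zero_add] at hb3
      rw [hb3] at hp
      simp at hp
    have hlt2 : a 2 < a₀ := by
      have hp := hBpos v3 hv3ne
      have h := hre v3
      rw [hP2v3] at h
      by_contra hc
      push_neg at hc
      have hprod : a 0 * (B (P 0 v3) (P 0 v3)).re + a 1 * (B (P 1 v3) (P 1 v3)).re ≤ 0 := by
        nlinarith [mul_nonneg (sub_nonneg.mpr hc) hp.le]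
      have h1 : (B (P 0 v3) (P 0 v3)).re = 0 := by
        nlinarith [mul_nonneg (ha 1).le (hBre (P 1 v3)), hBre (P 0 v3), ha 0]
      have h2 : (B (P 1 v3) (P 1 v3)).re = 0 := by
        nlinarith [mul_nonneg (ha 0).le (hBre (P 0 v3)), hBre (P 1 v3), ha 1]
      have hz1 := hzero 0 v3 h1
      have hz2 := hzero 1 v3 h2
      have hb1 : B e1 v3 = 0 := by
        rw [← hP0e1, hsa, hz1, hB0right]
      have hb2 : B e2 v3 = 0 := by
        rw [← hP1e2, hsa, hz2, hB0right]
      have : B v3 v3 = 0 := by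
        rw [hv3e] at hb1 hb2 ⊢
        rw [hBadd, hb1, hb2, add_zero]
      rw [this] at hp
      simp at hp
    refine ⟨fun i => ?_, hsumR⟩
    fin_cases i <;> assumption
  · rintro ⟨hlt, hs2⟩
    have h1 := ha 0; have h2 := ha 1; have h3 := ha 2
    have l1 := hlt 0; have l2 := hlt 1; have l3 := hlt 2
    have d1 : 0 < a₀ - a 0 := by linarith
    have d2 : 0 < a₀ - a 1 := by linarith
    set p : ℝ := a 0 / (a₀ - a 1) with hp_def
    set q : ℝ := a 1 / (a₀ - a 0) with hq_def
    set w1 : ℝ := (a₀ - a 1) / a 0 with hw1_def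
    set w2 : ℝ := (a₀ - a 0) / a 1 with hw2_def
    set u : ℝ := (a₀ - a 0) / a 2 with hu_def
    set v : ℝ := (a₀ - a 1) / a 2 with hv_def
    have hp : 0 < p := div_pos h1 d2
    have hq : 0 < q := div_pos h2 d1
    have hpq : 1 < p * q := by
      rw [hp_def, hq_def, div_mul_div_comm, lt_div_iff₀ (by positivity)]
      nlinarith
    have huv : u + v = 1 := by
      rw [hu_def, hv_def, ← add_div, div_eq_one_iff_eq h3.ne']
      linarith
    have hvu : (q - 1) * u = (p - 1) * v := by
      rw [hq_def, hp_def, hu_def, hv_def]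
      field_simp
      ring
    have hw1 : p * w1 = 1 := by
      rw [hp_def, hw1_def]; field_simp
    have hw2 : q * w2 = 1 := by
      rw [hq_def, hw2_def]; field_simp
    have e11 : a 0 + a 2 * u = a₀ := by
      rw [hu_def]; field_simp; ring
    have e12 : a 2 * v = a 0 * w1 := by
      rw [hv_def, hw1_def]; field_simp
    have e21 : a 2 * u = a 1 * w2 := by
      rw [hu_def, hw2_def]; field_simp
    have e22 : a 1 + a 2 * v = a₀ := by
      rw [hv_def]; field_simp; ring
    refine ⟨brickB p q, ![brickP1 w1, brickP2 w2, brickP3 u v],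
      brickB_add_left p q, brickB_conj_smul p q, brickB_conj p q,
      brickB_pos hp hpq, ?_, ?_, ?_, ?_⟩
    · intro i
      fin_cases i
      · exact brickP1_range
      · exact brickP2_range
      · exact brickP3_range huv
    · intro i
      fin_cases i
      · exact brickP1_idem
      · exact brickP2_idem
      · exact brickP3_idem huv
    · intro i x y
      fin_cases i
      · exact brickP1_selfadj hw1 x y
      · exact brickP2_selfadj hw2 x y
      · exact brickP3_selfadj hvu x y
    · rw [Fin.sum_univ_three]
      simp only [Matrix.cons_val_zero, Matrix.cons_val_one, Matrix.head_cons]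
      exact brick_sum e11 e12 e21 e22
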